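/- If A is Hurwitz (all eigenvalues have negative real part) and ‖A_d‖ < 1/(sup_{ω∈ℝ} ‖(iωI − A)⁻¹‖), then the delayed system ẋ(t) = Ax(t) + A_d x(t−τ) is stable for all delays τ ≥ 0 (delay-independent stability): the quasipolynomial det(sI − A − A_d e^{−sτ}) has no zeros with Re s ≥ 0. -/

import Mathlib

set_option maxHeartbeats 1000000
set_option synthInstance.maxHeartbeats 200000

open Matrix

/-- Small-gain delay-independent stability: if `A` is Hurwitz and
`‖A_d‖ < 1 / sup_{ω∈ℝ} ‖(iωI − A)⁻¹‖`, then for every delay `τ ≥ 0` the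
quasipolynomial `det(sI − A − A_d e^{−sτ})` has no zero with `Re s ≥ 0`. -/
theorem stmt_18 {n : Type*} [Fintype n] [DecidableEq n]
    (A Ad : Matrix n n ℝ)
    (hHur : ∀ μ ∈ spectrum ℂ (A.map Complex.ofReal), μ.re < 0)
    (hsmall : ‖Matrix.toEuclideanCLM (𝕜 := ℂ) (Ad.map Complex.ofReal)‖ <
      1 / ⨆ ω : ℝ, ‖Matrix.toEuclideanCLM (𝕜 := ℂ)
        (((Complex.I * ω) • (1 : Matrix n n ℂ) - A.map Complex.ofReal)⁻¹)‖) :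
    ∀ τ : ℝ, 0 ≤ τ → ∀ s : ℂ, 0 ≤ s.re →
      (s • (1 : Matrix n n ℂ) -
        (A.map Complex.ofReal + Complex.exp (-(s * τ)) • Ad.map Complex.ofReal)).det ≠ 0 := by
  classical
  set e := (Matrix.toEuclideanCLM (𝕜 := ℂ) (n := n)) with he
  set Ac : Matrix n n ℂ := A.map Complex.ofReal with hAc
  set Adc : Matrix n n ℂ := Ad.map Complex.ofReal with hAdc
  set T : EuclideanSpace ℂ n →L[ℂ] EuclideanSpace ℂ n := e Ac with hT
  -- every point of the closed right half plane is outside the spectrum of `Ac`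
  have hUnit : ∀ z : ℂ, 0 ≤ z.re → IsUnit (z • (1 : Matrix n n ℂ) - Ac) := by
    intro z hz
    have hz' : z ∉ spectrum ℂ Ac := fun h => absurd hz (not_le.mpr (hHur z h))
    have := spectrum.notMem_iff.mp hz'
    rwa [Algebra.algebraMap_eq_smul_one] at this
  -- pushing matrix inverses through the algebra equivalence
  have hinv : ∀ M : Matrix n n ℂ, IsUnit M → e M⁻¹ = Ring.inverse (e M) := by
    intro M hM
    obtain ⟨u, rfl⟩ := hM
    have hu : IsUnit (e (u : Matrix n n ℂ)) := u.isUnit.map e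
    rw [Matrix.nonsing_inv_eq_ringInverse, Ring.inverse_unit, ← hu.unit_spec,
      Ring.inverse_unit, eq_comm]
    apply Units.inv_eq_of_mul_eq_one_right
    rw [hu.unit_spec, ← _root_.map_mul, u.mul_inv, _root_.map_one]
  have halg : ∀ z : ℂ, e (z • (1 : Matrix n n ℂ) - Ac) = algebraMap ℂ _ z - T := by
    intro z
    rw [_root_.map_sub, _root_.map_smul, _root_.map_one, Algebra.algebraMap_eq_smul_one]
  have hkey : ∀ z : ℂ, IsUnit (z • (1 : Matrix n n ℂ) - Ac) →
      e ((z • (1 : Matrix n n ℂ) - Ac)⁻¹) = resolvent T z := by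
    intro z hz
    rw [hinv _ hz, resolvent, halg]
  have hmemρ : ∀ z : ℂ, 0 ≤ z.re → z ∈ resolventSet ℂ T := by
    intro z hz
    rw [spectrum.mem_resolventSet_iff, ← halg]
    exact (hUnit z hz).map e
  -- the supremum over the imaginary axis
  set K : ℝ := ⨆ ω : ℝ,
    ‖e (((Complex.I * ω) • (1 : Matrix n n ℂ) - Ac)⁻¹)‖ with hK
  have hIre : ∀ ω : ℝ, (Complex.I * ω).re = 0 := by
    intro ω; simp
  -- boundedness of the range defining `K`
  have hbdd : BddAbove (Set.range fun ω : ℝ =>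
      ‖e (((Complex.I * ω) • (1 : Matrix n n ℂ) - Ac)⁻¹)‖) := by
    have htend : Filter.Tendsto (fun z : ℂ => ‖resolvent T z‖)
        (Bornology.cobounded ℂ) (nhds 0) := by
      simpa using (spectrum.resolvent_tendsto_cobounded (𝕜 := ℂ) T).norm
    have hev : ∀ᶠ z : ℂ in Bornology.cobounded ℂ, ‖resolvent T z‖ < 1 :=
      htend.eventually_lt_const one_pos
    obtain ⟨r, -, hr⟩ := (Filter.hasBasis_cobounded_norm (E := ℂ)).eventually_iff.mp hev
    set R : ℝ := max r 0 with hR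
    have hcont : ContinuousOn (fun ω : ℝ => ‖resolvent T (Complex.I * ω)‖)
        (Set.Icc (-R) R) := by
      intro x _
      have hmem := hmemρ (Complex.I * x) (le_of_eq (hIre x).symm)
      have hdiff := (spectrum.hasDerivAt_resolvent hmem).differentiableAt
      have hc0 : Continuous (fun ω' : ℝ => Complex.I * (ω' : ℂ)) :=
        continuous_const.mul Complex.continuous_ofReal
      have hc1 : ContinuousAt (fun ω' : ℝ => resolvent T (Complex.I * ω')) x :=
        Filter.Tendsto.comp (g := resolvent T)
          (f := fun ω' : ℝ => Complex.I * (ω' : ℂ)) hdiff.continuousAt hc0.continuousAt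
      exact hc1.norm.continuousWithinAt
    obtain ⟨b, hb⟩ := (isCompact_Icc.image_of_continuousOn hcont).bddAbove
    refine ⟨max 1 b, ?_⟩
    rintro x ⟨ω, rfl⟩
    show ‖e (((Complex.I * (ω : ℂ)) • (1 : Matrix n n ℂ) - Ac)⁻¹)‖ ≤ max 1 b
    rw [hkey _ (hUnit _ (le_of_eq (hIre ω).symm))]
    rcases le_or_gt (|ω|) R with hω | hω
    · have : ‖resolvent T (Complex.I * ω)‖ ∈
          (fun ω : ℝ => ‖resolvent T (Complex.I * ω)‖) '' Set.Icc (-R) R :=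
        ⟨ω, abs_le.mp hω, rfl⟩
      exact le_trans (hb this) (le_max_right _ _)
    · have hrn : r ≤ ‖Complex.I * (ω : ℂ)‖ := by
        rw [norm_mul, Complex.norm_I, one_mul, Complex.norm_real, Real.norm_eq_abs]
        exact le_trans (le_trans (le_max_left r 0) hω.le) (le_refl _)
      exact le_trans (hr hrn).le (le_max_left _ _)
  have hle : ∀ ω : ℝ, ‖resolvent T (Complex.I * ω)‖ ≤ K := by
    intro ω
    rw [← hkey _ (hUnit _ (le_of_eq (hIre ω).symm))]
    exact le_ciSup hbdd ω
  -- Phragmén–Lindelöf: the resolvent is bounded by `K` on the closed right half plane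
  have hPL : ∀ z : ℂ, 0 ≤ z.re → ‖resolvent T z‖ ≤ K := by
    intro z hz
    have hd : DiffContOnCl ℂ (resolvent T) {w : ℂ | 0 < w.re} := by
      apply DifferentiableOn.diffContOnCl
      intro w hw
      have hw' : 0 ≤ w.re := by
        have : closure {w : ℂ | 0 < w.re} ⊆ {w : ℂ | 0 ≤ w.re} :=
          closure_minimal (fun x hx => show (0:ℝ) ≤ x.re from le_of_lt hx)
            (isClosed_le continuous_const Complex.continuous_re)
        exact this hw
      exact (spectrum.hasDerivAt_resolvent (hmemρ w hw')).differentiableAt.differentiableWithinAt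
    have hexp : ∃ c < (2 : ℝ), ∃ B, resolvent T
        =O[Bornology.cobounded ℂ ⊓ Filter.principal {w : ℂ | 0 < w.re}]
        fun w => Real.exp (B * ‖w‖ ^ c) := by
      refine ⟨1, one_lt_two, 0, ?_⟩
      have := ((spectrum.resolvent_tendsto_cobounded T).isBigO_one ℝ).mono
        (inf_le_left (b := Filter.principal {w : ℂ | 0 < w.re}))
      simpa using this
    have hre : Filter.Tendsto (fun x : ℝ => resolvent T x) Filter.atTop (nhds 0) := by
      apply (spectrum.resolvent_tendsto_cobounded T).comp
      rw [← tendsto_norm_atTop_iff_cobounded]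
      simpa [Complex.norm_real] using Filter.tendsto_abs_atTop_atTop
    have him : ∀ x : ℝ, ‖resolvent T (x * Complex.I)‖ ≤ K := by
      intro x; rw [mul_comm]; exact hle x
    exact PhragmenLindelof.right_half_plane_of_tendsto_zero_on_real hd hexp hre him hz
  -- `K` is positive, and the small-gain bound
  have hKpos : 0 < K := by
    have h1 : (0 : ℝ) < 1 / K := lt_of_le_of_lt (norm_nonneg _) hsmall
    exact one_div_pos.mp h1
  have hsg : K * ‖e Adc‖ < 1 := by
    have := (mul_lt_mul_of_pos_left hsmall hKpos)
    rwa [mul_one_div, div_self hKpos.ne'] at this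
  -- main argument
  intro τ hτ s hs
  set c : ℂ := Complex.exp (-(s * τ)) with hc
  have hcnorm : ‖c‖ ≤ 1 := by
    rw [hc, Complex.norm_exp, Real.exp_le_one_iff]
    have : (s * (τ : ℂ)).re = s.re * τ := by simp [Complex.mul_re]
    rw [Complex.neg_re, this]
    exact neg_nonpos.mpr (mul_nonneg hs hτ)
  have hU : IsUnit (s • (1 : Matrix n n ℂ) - Ac) := hUnit s hs
  have hdet : IsUnit (s • (1 : Matrix n n ℂ) - Ac).det :=
    (Matrix.isUnit_iff_isUnit_det _).mp hU
  set Y : Matrix n n ℂ := (s • (1 : Matrix n n ℂ) - Ac)⁻¹ * Adc with hY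
  have hfac : s • (1 : Matrix n n ℂ) - (Ac + c • Adc)
      = (s • (1 : Matrix n n ℂ) - Ac) * (1 - c • Y) := by
    rw [Matrix.mul_sub, mul_one, hY, Matrix.mul_smul, ← Matrix.mul_assoc,
      Matrix.mul_nonsing_inv _ hdet, Matrix.one_mul, sub_add_eq_sub_sub]
  have hYnorm : ‖e (c • Y)‖ < 1 := by
    rw [_root_.map_smul]
    calc ‖c • e Y‖ ≤ ‖c‖ * ‖e Y‖ := ContinuousLinearMap.opNorm_smul_le _ _
      _ ≤ 1 * ‖e Y‖ :=
          mul_le_mul_of_nonneg_right hcnorm (norm_nonneg _)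
      _ = ‖e Y‖ := one_mul _
      _ ≤ ‖e ((s • (1 : Matrix n n ℂ) - Ac)⁻¹)‖ * ‖e Adc‖ := by
          rw [hY, _root_.map_mul]; exact norm_mul_le _ _
      _ ≤ K * ‖e Adc‖ := by
          apply mul_le_mul_of_nonneg_right _ (norm_nonneg _)
          rw [hkey s hU]; exact hPL s hs
      _ < 1 := hsg
  have hUnit2 : IsUnit ((1 : Matrix n n ℂ) - c • Y) := by
    have h1 : IsUnit ((1 : EuclideanSpace ℂ n →L[ℂ] EuclideanSpace ℂ n) - e (c • Y)) :=
      (Units.oneSub (e (c • Y)) hYnorm).isUnit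
    have h2 : IsUnit (e ((1 : Matrix n n ℂ) - c • Y)) := by
      rwa [_root_.map_sub, _root_.map_one]
    have h3 := h2.map (Matrix.toEuclideanCLM (𝕜 := ℂ) (n := n)).symm
    rwa [he, StarAlgEquiv.symm_apply_apply] at h3
  rw [hfac, Matrix.det_mul]
  exact mul_ne_zero hdet.ne_zero ((Matrix.isUnit_iff_isUnit_det _).mp hUnit2).ne_zero
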